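/- Given a commutative ladder of abelian groups with exact rows A_i → B_i → C_i → D_i → E_i (vertical maps from level i+1 to level i): if (B_i) is a,b-surjective, (D_i) is (a+b),c-surjective, and (E_i) is (a+b),d-injective, then (C_i) is a,(b+c)-surjective. -/

import Mathlib

open CategoryTheory Opposite

/-- The transition map from level `j` to level `i` (for `i ≤ j`) of an inverse system of
abelian groups indexed by `ℕ`. -/
noncomputable def InvSys.trans (F : ℕᵒᵖ ⥤ AddCommGrpCat) {i j : ℕ} (h : i ≤ j) :
    F.obj (op j) → F.obj (op i) :=
  F.map (homOfLE h).op

/-- `a,b`-injectivity of an inverse system of abelian groups. -/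
def InvSys.IsInjective (F : ℕᵒᵖ ⥤ AddCommGrpCat) (a b : ℕ) : Prop :=
  ∀ c (_ : a ≤ c), ∀ x : F.obj (op (b + c)),
    InvSys.trans F (by omega : a ≤ b + c) x = 0 →
    InvSys.trans F (by omega : c ≤ b + c) x = 0

/-- `a,b`-surjectivity of an inverse system of abelian groups. -/
def InvSys.IsSurjective (F : ℕᵒᵖ ⥤ AddCommGrpCat) (a b : ℕ) : Prop :=
  ∀ c (_ : a ≤ c), ∀ x : F.obj (op c),
    (∃ y : F.obj (op (b + c)), InvSys.trans F (by omega : c ≤ b + c) y = x) →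
    ∀ d (_ : c ≤ d), ∃ z : F.obj (op d), InvSys.trans F (by omega : c ≤ d) z = x

lemma InvSys.trans_trans (F : ℕᵒᵖ ⥤ AddCommGrpCat) {i j k : ℕ} (hij : i ≤ j) (hjk : j ≤ k)
    (x : F.obj (op k)) :
    InvSys.trans F hij (InvSys.trans F hjk x) = InvSys.trans F (hij.trans hjk) x := by
  show (F.map _ ≫ F.map _) x = F.map _ x
  rw [← F.map_comp]
  rfl

lemma InvSys.trans_nat {F G : ℕᵒᵖ ⥤ AddCommGrpCat} (η : F ⟶ G) {i j : ℕ} (h : i ≤ j)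
    (x : F.obj (op j)) :
    η.app (op i) (InvSys.trans F h x) = InvSys.trans G h (η.app (op j) x) := by
  show (F.map _ ≫ η.app _) x = (η.app _ ≫ G.map _) x
  rw [η.naturality]

lemma InvSys.trans_sub (F : ℕᵒᵖ ⥤ AddCommGrpCat) {i j : ℕ} (h : i ≤ j) (x y : F.obj (op j)) :
    InvSys.trans F h (x - y) = InvSys.trans F h x - InvSys.trans F h y :=
  (F.map (homOfLE h).op).hom.map_sub x y

lemma InvSys.trans_zero (F : ℕᵒᵖ ⥤ AddCommGrpCat) {i j : ℕ} (h : i ≤ j) :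
    InvSys.trans F h (0 : F.obj (op j)) = 0 :=
  (F.map (homOfLE h).op).hom.map_zero

/-- Generalized five lemma for inverse systems (surjectivity part): given a commutative
ladder of inverse systems of abelian groups with exact rows
`A_i → B_i → C_i → D_i → E_i`, if `(B_i)` is `a,b`-surjective, `(D_i)` is `(a+b),c`-surjective
and `(E_i)` is `(a+b),d`-injective, then `(C_i)` is `a,(b+c)`-surjective. -/
theorem invSys_five_lemma_surjective
    (A B C D E : ℕᵒᵖ ⥤ AddCommGrpCat)
    (α : A ⟶ B) (β : B ⟶ C) (γ : C ⟶ D) (δ : D ⟶ E)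
    (hexB : ∀ i : ℕ, Function.Exact (α.app (op i)) (β.app (op i)))
    (hexC : ∀ i : ℕ, Function.Exact (β.app (op i)) (γ.app (op i)))
    (hexD : ∀ i : ℕ, Function.Exact (γ.app (op i)) (δ.app (op i)))
    (a b c d : ℕ)
    (hB : InvSys.IsSurjective B a b)
    (hD : InvSys.IsSurjective D (a + b) c)
    (hE : InvSys.IsInjective E (a + b) d) :
    InvSys.IsSurjective C a (b + c) := by
  rintro e he x ⟨y, hy⟩ f hef
  -- `w` : image of `γ y` at level `b + e`
  set w : D.obj (op (b + e)) :=
    γ.app (op (b + e)) (InvSys.trans C (by omega : b + e ≤ b + c + e) y) with hw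
  -- `w` is hit from level `c + (b + e)`, hence (by hD) from level `d + (b + f)`
  have hwhit : ∃ yd : D.obj (op (c + (b + e))),
      InvSys.trans D (by omega : b + e ≤ c + (b + e)) yd = w := by
    refine ⟨γ.app (op (c + (b + e)))
      (InvSys.trans C (by omega : c + (b + e) ≤ b + c + e) y), ?_⟩
    rw [← InvSys.trans_nat γ, InvSys.trans_trans]
  obtain ⟨u, hu⟩ := hD (b + e) (by omega) w hwhit (d + (b + f)) (by omega)
  -- `δ u` dies at level `a + b`
  have hδu0 : InvSys.trans E (by omega : a + b ≤ d + (b + f)) (δ.app (op (d + (b + f))) u)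
      = 0 := by
    have h1 : InvSys.trans E (by omega : b + e ≤ d + (b + f))
        (δ.app (op (d + (b + f))) u) = 0 := by
      rw [← InvSys.trans_nat δ, hu, hw]
      exact (hexD (b + e)).apply_apply_eq_zero _
    calc InvSys.trans E (by omega : a + b ≤ d + (b + f)) (δ.app (op (d + (b + f))) u)
        = InvSys.trans E (by omega : a + b ≤ b + e)
            (InvSys.trans E (by omega : b + e ≤ d + (b + f))
              (δ.app (op (d + (b + f))) u)) := (InvSys.trans_trans E _ _ _).symm
      _ = 0 := by rw [h1]; exact InvSys.trans_zero E _
  -- so by hE, `δ u` dies at level `b + f`, i.e. `u' := trans u` is killed by `δ`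
  have hδu' := hE (b + f) (by omega) (δ.app (op (d + (b + f))) u) hδu0
  set u' : D.obj (op (b + f)) := InvSys.trans D (by omega : b + f ≤ d + (b + f)) u with hu'
  have hδu'0 : δ.app (op (b + f)) u' = 0 := by
    rw [hu', InvSys.trans_nat δ]; exact hδu'
  -- exactness: `u' = γ v`
  obtain ⟨v, hv⟩ := (hexD (b + f) u').mp hδu'0
  -- difference `p` at level `b + e` is killed by `γ`
  set p : C.obj (op (b + e)) :=
    InvSys.trans C (by omega : b + e ≤ b + f) v
      - InvSys.trans C (by omega : b + e ≤ b + c + e) y with hp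
  have hγp : γ.app (op (b + e)) p = 0 := by
    rw [hp, map_sub, InvSys.trans_nat γ, hv, hu', InvSys.trans_trans, ← hw]
    have : InvSys.trans D (by omega : b + e ≤ d + (b + f)) u = w := by
      rw [← hu]
    rw [this]
    exact sub_self w
  -- exactness: `p = β q`
  obtain ⟨q, hq⟩ := (hexC (b + e) p).mp hγp
  -- `r := trans q` at level `e` is hit from `b + e`, hence (by hB) from `f`
  set r : B.obj (op e) := InvSys.trans B (by omega : e ≤ b + e) q with hr
  obtain ⟨s, hs⟩ := hB e he r ⟨q, rfl⟩ f hef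
  -- the element `z := v - β s` works
  refine ⟨InvSys.trans C (by omega : f ≤ b + f) v - β.app (op f) s, ?_⟩
  rw [InvSys.trans_sub, InvSys.trans_trans, ← InvSys.trans_nat β, hs, hr,
    InvSys.trans_nat β, hq, hp, InvSys.trans_sub, InvSys.trans_trans,
    InvSys.trans_trans, hy]
  abel
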